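/- Let A be an N×N real matrix with nonnegative off-diagonal entries and zero column sums. Then for every τ > 0 the matrix I − τA is invertible. -/
import Mathlib

/-- For an `N × N` real matrix `A` with nonnegative off-diagonal entries and zero
column sums, the implicit Euler matrix `I − τA` is invertible for every `τ > 0`. -/
theorem implicit_euler_invertible (N : ℕ) (A : Matrix (Fin N) (Fin N) ℝ)
    (hoff : ∀ i j, i ≠ j → 0 ≤ A i j) (hsum : ∀ j, ∑ i, A i j = 0) :
    ∀ τ : ℝ, 0 < τ → IsUnit ((1 : Matrix (Fin N) (Fin N) ℝ) - τ • A) := by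
  intro τ hτ
  set M : Matrix (Fin N) (Fin N) ℝ := (1 : Matrix (Fin N) (Fin N) ℝ) - τ • A with hM
  rw [Matrix.isUnit_iff_isUnit_det, isUnit_iff_ne_zero]
  apply det_ne_zero_of_sum_col_lt_diag
  intro k
  have hAkk : A k k = -∑ i ∈ Finset.univ.erase k, A i k := by
    have := hsum k
    rw [← Finset.add_sum_erase _ _ (Finset.mem_univ k)] at this
    linarith
  have hoffsum : 0 ≤ ∑ i ∈ Finset.univ.erase k, A i k :=
    Finset.sum_nonneg fun i hi => hoff i k (Finset.ne_of_mem_erase hi)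
  have hdiag : M k k = 1 + τ * ∑ i ∈ Finset.univ.erase k, A i k := by
    simp only [hM, Matrix.sub_apply, Matrix.smul_apply, Matrix.one_apply_eq, hAkk,
      smul_eq_mul]
    ring
  have hsumoff : ∑ i ∈ Finset.univ.erase k, ‖M i k‖
      = τ * ∑ i ∈ Finset.univ.erase k, A i k := by
    rw [Finset.mul_sum]
    apply Finset.sum_congr rfl
    intro i hi
    have hik : i ≠ k := Finset.ne_of_mem_erase hi
    have hMik : M i k = -(τ * A i k) := by
      simp [hM, Matrix.sub_apply, Matrix.one_apply_ne hik]
    rw [hMik, norm_neg, Real.norm_of_nonneg (mul_nonneg hτ.le (hoff i k hik))]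
  rw [hsumoff, Real.norm_of_nonneg (by rw [hdiag]; positivity)]
  rw [hdiag]
  linarith
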